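/- If h : cone(K) → B is a proper expanding map into a metric space B, then there exists t₀ ≥ 0 such that the map G : |K| × [0,∞) → B defined by G(x,t) = h([x, t+t₀]) satisfies G(σ × {0}) ∩ G(τ × [0,∞)) = ∅ for every pair of disjoint simplices σ, τ of K. -/
import Mathlib


open Set

noncomputable section

variable {N : ℕ}

/-- The open cone on (the geometric realization of) `K`, realized in `E × ℝ` as
`{(t·x, t) : x ∈ |K|, t ≥ 0}`; the cone point is `(0,0)` and `[x,t] = (t·x, t)`. -/
def coneSet (K : Geometry.SimplicialComplex ℝ (EuclideanSpace ℝ (Fin N))) :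
    Set (EuclideanSpace ℝ (Fin N) × ℝ) :=
  {p | ∃ x ∈ K.space, ∃ t : ℝ, 0 ≤ t ∧ p = (t • x, t)}

/-- The subcone over the simplex `σ`. -/
def coneOf (σ : Finset (EuclideanSpace ℝ (Fin N))) :
    Set (EuclideanSpace ℝ (Fin N) × ℝ) :=
  {p | ∃ x ∈ convexHull ℝ (↑σ : Set (EuclideanSpace ℝ (Fin N))), ∃ t : ℝ, 0 ≤ t ∧ p = (t • x, t)}

/-- Two restrictions `h|A₁`, `h|A₂` diverge: for every `D` there are compact sets outside of
which the images of the two sets are more than `D` apart. -/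
def DivergeOn {X B : Type*} [TopologicalSpace X] [PseudoMetricSpace B]
    (h : X → B) (A₁ A₂ : Set X) : Prop :=
  ∀ D : ℝ, 0 < D → ∃ C₁ C₂ : Set X, IsCompact C₁ ∧ IsCompact C₂ ∧
    ∀ p ∈ A₁ \ C₁, ∀ q ∈ A₂ \ C₂, D < dist (h p) (h q)

/-- `h : cone(K) → B` is expanding: for every pair of disjoint simplices `σ, τ` of `K`,
the restrictions of `h` to the subcones over `σ` and `τ` diverge. -/
def Expanding (K : Geometry.SimplicialComplex ℝ (EuclideanSpace ℝ (Fin N)))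
    {B : Type*} [PseudoMetricSpace B] (h : ↥(coneSet K) → B) : Prop :=
  ∀ σ ∈ K.faces, ∀ τ ∈ K.faces, Disjoint σ τ →
    DivergeOn h {p | (p : _ × ℝ) ∈ coneOf σ} {p | (p : _ × ℝ) ∈ coneOf τ}

/-- if `h : cone(K) → B` is a proper expanding map into a metric space, then
there is `t₀ ≥ 0` such that `G(x,t) := h([x, t+t₀])` satisfies
`G(σ×{0}) ∩ G(τ×[0,∞)) = ∅` for all pairs of disjoint simplices `σ, τ` of `K`. -/
theorem expanding_map_eventually_unlinked
    (K : Geometry.SimplicialComplex ℝ (EuclideanSpace ℝ (Fin N))) (hfin : K.faces.Finite)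
    {B : Type*} [MetricSpace B] (h : ↥(coneSet K) → B)
    (hcont : Continuous h) (hproper : IsProperMap h) (hexp : Expanding K h) :
    ∃ t₀ : ℝ, 0 ≤ t₀ ∧ ∀ σ ∈ K.faces, ∀ τ ∈ K.faces, Disjoint σ τ →
      ∀ (x y : EuclideanSpace ℝ (Fin N)) (t : ℝ), 0 ≤ t →
        x ∈ convexHull ℝ (↑σ : Set (EuclideanSpace ℝ (Fin N))) →
        y ∈ convexHull ℝ (↑τ : Set (EuclideanSpace ℝ (Fin N))) →
        ∀ (hp : (t₀ • x, t₀) ∈ coneSet K) (hq : ((t + t₀) • y, t + t₀) ∈ coneSet K),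
          h ⟨(t₀ • x, t₀), hp⟩ ≠ h ⟨((t + t₀) • y, t + t₀), hq⟩ := by
  classical
  have key : ∀ σ ∈ K.faces, ∀ τ ∈ K.faces, Disjoint σ τ → ∃ M : ℝ,
      ∀ (x y : EuclideanSpace ℝ (Fin N)) (s t : ℝ), M < s → M < t →
        x ∈ convexHull ℝ (↑σ : Set (EuclideanSpace ℝ (Fin N))) →
        y ∈ convexHull ℝ (↑τ : Set (EuclideanSpace ℝ (Fin N))) →
        ∀ (hp : (s • x, s) ∈ coneSet K) (hq : (t • y, t) ∈ coneSet K),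
          h ⟨(s • x, s), hp⟩ ≠ h ⟨(t • y, t), hq⟩ := by
    intro σ hσ τ hτ hdisj
    obtain ⟨C₁, C₂, hC₁, hC₂, hD⟩ := hexp σ hσ τ hτ hdisj 1 one_pos
    have f_cont : Continuous (fun p : ↥(coneSet K) => (p : EuclideanSpace ℝ (Fin N) × ℝ).2) :=
      by fun_prop
    obtain ⟨M₁, hM₁⟩ := (hC₁.image f_cont).bddAbove
    obtain ⟨M₂, hM₂⟩ := (hC₂.image f_cont).bddAbove
    refine ⟨max (max M₁ M₂) 0, ?_⟩
    intro x y s t hs ht hx hy hp hq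
    have hs0 : 0 ≤ s := le_of_lt (lt_of_le_of_lt (le_max_right _ _) hs)
    have ht0 : 0 ≤ t := le_of_lt (lt_of_le_of_lt (le_max_right _ _) ht)
    have hps : (⟨(s • x, s), hp⟩ : ↥(coneSet K)) ∉ C₁ := by
      intro hmem
      have h1 : s ≤ M₁ := hM₁ ⟨_, hmem, rfl⟩
      have := lt_of_le_of_lt (le_trans (le_max_left M₁ M₂) (le_max_left _ 0)) hs
      linarith
    have hqt : (⟨(t • y, t), hq⟩ : ↥(coneSet K)) ∉ C₂ := by
      intro hmem
      have h1 : t ≤ M₂ := hM₂ ⟨_, hmem, rfl⟩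
      have := lt_of_le_of_lt (le_trans (le_max_right M₁ M₂) (le_max_left _ 0)) ht
      linarith
    have hdgt := hD ⟨(s • x, s), hp⟩ ⟨⟨x, hx, s, hs0, rfl⟩, hps⟩
      ⟨(t • y, t), hq⟩ ⟨⟨y, hy, t, ht0, rfl⟩, hqt⟩
    intro heq
    rw [heq, dist_self] at hdgt
    linarith
  set P : Set (Finset (EuclideanSpace ℝ (Fin N)) × Finset (EuclideanSpace ℝ (Fin N))) :=
    {q | q.1 ∈ K.faces ∧ q.2 ∈ K.faces ∧ Disjoint q.1 q.2} with hP
  have hPfin : P.Finite := (hfin.prod hfin).subset (fun q hq => ⟨hq.1, hq.2.1⟩)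
  have hchoice : ∀ q : P, ∃ M : ℝ,
      ∀ (x y : EuclideanSpace ℝ (Fin N)) (s t : ℝ), M < s → M < t →
        x ∈ convexHull ℝ (↑q.1.1 : Set (EuclideanSpace ℝ (Fin N))) →
        y ∈ convexHull ℝ (↑q.1.2 : Set (EuclideanSpace ℝ (Fin N))) →
        ∀ (hp : (s • x, s) ∈ coneSet K) (hq : (t • y, t) ∈ coneSet K),
          h ⟨(s • x, s), hp⟩ ≠ h ⟨(t • y, t), hq⟩ :=
    fun q => key q.1.1 q.2.1 q.1.2 q.2.2.1 q.2.2.2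
  choose g hg using hchoice
  haveI := hPfin.to_subtype
  obtain ⟨M0, hM0⟩ := (Set.finite_range g).bddAbove
  refine ⟨max M0 0 + 1, by positivity, ?_⟩
  intro σ hσ τ hτ hd x y t ht hx hy hp hq
  have hqP : (σ, τ) ∈ P := ⟨hσ, hτ, hd⟩
  have hgle : g ⟨(σ, τ), hqP⟩ ≤ M0 := hM0 ⟨_, rfl⟩
  have h1 : g ⟨(σ, τ), hqP⟩ < max M0 0 + 1 :=
    lt_of_le_of_lt (le_trans hgle (le_max_left _ _)) (by linarith)
  have h2 : g ⟨(σ, τ), hqP⟩ < t + (max M0 0 + 1) := by linarith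
  exact hg ⟨(σ, τ), hqP⟩ x y _ _ h1 h2 hx hy hp hq

end
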